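/- For two real numbers u, v with the logistic distribution function F(x) = (1+e^{-x})^{-1}: the distribution of min(X₁,X₂)+η, where X₁,X₂ are i.i.d. logistic and η is independent exponential(1), has distribution function G satisfying G(x) = F(x) for all x; equivalently, for all real x, P(min(X₁,X₂) + η ≤ x) = (1 + e^{-x})^{-1}. -/

import Mathlib

open MeasureTheory ProbabilityTheory

/-- The logistic distribution on ℝ, with density `(e^{x/2}+e^{-x/2})⁻²`. -/
noncomputable def logisticMeasure : Measure ℝ :=
  volume.withDensity fun x => ENNReal.ofReal ((Real.exp (x / 2) + Real.exp (-x / 2)) ^ 2)⁻¹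

open Real Filter Topology Set

lemma dens_eq (m : ℝ) : ((Real.exp (m/2) + Real.exp (-m/2)) ^ 2)⁻¹
    = Real.exp m / (1 + Real.exp m)^2 := by
  have h1 : Real.exp (m/2) * Real.exp (m/2) = Real.exp m := by
    rw [← Real.exp_add]; norm_num
  have h2 : Real.exp (-m/2) * Real.exp (-m/2) = Real.exp (-m) := by
    rw [← Real.exp_add]; norm_num
  have h3 : Real.exp (m/2) * Real.exp (-m/2) = 1 := by
    rw [← Real.exp_add, show m/2 + -m/2 = 0 by ring, Real.exp_zero]
  have expand : (Real.exp (m/2) + Real.exp (-m/2))^2 = Real.exp m + 2 + Real.exp (-m) := by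
    linear_combination h1 + 2*h3 + h2
  rw [expand, Real.exp_neg]
  have h := Real.exp_pos m
  field_simp
  ring

lemma FG_eq (y : ℝ) : (1 + Real.exp (-y))⁻¹ + Real.exp (-y) / (1 + Real.exp (-y))^2
    = 1 - ((1 + Real.exp y)⁻¹)^2 := by
  rw [Real.exp_neg]
  have h := Real.exp_pos y
  have h1 : (1:ℝ) + (Real.exp y)⁻¹ ≠ 0 := by positivity
  have h2 : (1:ℝ) + Real.exp y ≠ 0 := by positivity
  field_simp
  ring

lemma G_nonneg (y : ℝ) : 0 ≤ 1 - ((1 + Real.exp y)⁻¹)^2 := by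
  have h := Real.exp_pos y
  have hb : ((1:ℝ) + Real.exp y)⁻¹ ≤ 1 := by
    rw [inv_le_one_iff₀]; right; linarith
  have hb0 : (0:ℝ) ≤ (1 + Real.exp y)⁻¹ := by positivity
  nlinarith

lemma hasDerivAt_logisticF (y : ℝ) : HasDerivAt (fun z => (1 + Real.exp (-z))⁻¹)
    (Real.exp (-y) / (1 + Real.exp (-y))^2) y := by
  have h1 : HasDerivAt (fun z : ℝ => 1 + Real.exp (-z)) (-Real.exp (-y)) y := by
    simpa using (((hasDerivAt_id y).neg.exp).const_add 1)
  have h2 := h1.inv (by positivity)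
  refine h2.congr_deriv ?_
  field_simp

lemma logisticMeasure_Ioi (y : ℝ) :
    logisticMeasure (Set.Ioi y) = ENNReal.ofReal (1 + Real.exp y)⁻¹ := by
  rw [logisticMeasure, withDensity_apply _ measurableSet_Ioi]
  have hderiv : ∀ m ∈ Set.Ici y, HasDerivAt (fun z => -(1 + Real.exp z)⁻¹)
      (((Real.exp (m/2) + Real.exp (-m/2)) ^ 2)⁻¹) m := by
    intro m _
    have h1 : HasDerivAt (fun z : ℝ => 1 + Real.exp z) (Real.exp m) m :=
      (Real.hasDerivAt_exp m).const_add 1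
    have h2 := (h1.inv (by positivity)).neg
    refine h2.congr_deriv ?_
    rw [dens_eq m]
    ring
  have hpos : ∀ m ∈ Set.Ioi y, 0 ≤ ((Real.exp (m/2) + Real.exp (-m/2)) ^ 2)⁻¹ :=
    fun m _ => by positivity
  have htend : Tendsto (fun z => -(1 + Real.exp z)⁻¹) atTop (𝓝 0) := by
    have := ((tendsto_atTop_add_const_left _ 1 Real.tendsto_exp_atTop).inv_tendsto_atTop).neg
    simpa using this
  have hint := integrableOn_Ioi_deriv_of_nonneg' hderiv hpos htend
  have hval := integral_Ioi_of_hasDerivAt_of_nonneg' hderiv hpos htend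
  have := ofReal_integral_eq_lintegral_ofReal hint
    (Filter.Eventually.of_forall fun m => by positivity)
  rw [← this, hval]
  norm_num

lemma minCDF [IsProbabilityMeasure logisticMeasure] (y : ℝ) :
    Measure.map (fun p : ℝ × ℝ => min p.1 p.2) (logisticMeasure.prod logisticMeasure) (Set.Iic y)
      = ENNReal.ofReal (1 - ((1 + Real.exp y)⁻¹)^2) := by
  rw [Measure.map_apply (measurable_fst.min measurable_snd) measurableSet_Iic]
  have hset : (fun p : ℝ × ℝ => min p.1 p.2) ⁻¹' (Set.Iic y) = (Set.Ioi y ×ˢ Set.Ioi y)ᶜ := by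
    ext p
    simp only [Set.mem_preimage, Set.mem_Iic, min_le_iff, Set.mem_compl_iff, Set.mem_prod,
      Set.mem_Ioi, not_and_or, not_lt]
  rw [hset, prob_compl_eq_one_sub (measurableSet_Ioi.prod measurableSet_Ioi),
    Measure.prod_prod, logisticMeasure_Ioi]
  have hT : (0:ℝ) ≤ (1 + Real.exp y)⁻¹ := by positivity
  rw [← ENNReal.ofReal_mul hT, ENNReal.ofReal_sub _ (by positivity), ENNReal.ofReal_one, sq]

lemma conv_integral (x : ℝ) :
    (∫ t in Set.Ioi (0:ℝ), Real.exp (-t) * (1 - ((1 + Real.exp (x - t))⁻¹)^2)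
      = (1 + Real.exp (-x))⁻¹) ∧
    IntegrableOn (fun t => Real.exp (-t) * (1 - ((1 + Real.exp (x - t))⁻¹)^2)) (Set.Ioi 0) := by
  set ψ : ℝ → ℝ := fun t => -(Real.exp (-t) * (1 + Real.exp (-(x - t)))⁻¹) with hψ
  have hderiv : ∀ t ∈ Set.Ici (0:ℝ), HasDerivAt ψ
      (Real.exp (-t) * (1 - ((1 + Real.exp (x - t))⁻¹)^2)) t := by
    intro t _
    have hu : HasDerivAt (fun t : ℝ => Real.exp (-t)) (-Real.exp (-t)) t := by
      simpa using ((hasDerivAt_id t).neg.exp)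
    have hin : HasDerivAt (fun t : ℝ => x - t) (-1) t := by
      simpa using ((hasDerivAt_id t).const_sub x)
    have hv : HasDerivAt (fun t : ℝ => (1 + Real.exp (-(x - t)))⁻¹)
        ((Real.exp (-(x - t)) / (1 + Real.exp (-(x - t)))^2) * (-1)) t :=
      (hasDerivAt_logisticF (x - t)).comp t hin
    have h2 := (hu.mul hv).neg
    refine h2.congr_deriv ?_
    rw [← FG_eq (x - t)]
    ring
  have hpos : ∀ t ∈ Set.Ioi (0:ℝ),
      0 ≤ Real.exp (-t) * (1 - ((1 + Real.exp (x - t))⁻¹)^2) := by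
    intro t _
    have := G_nonneg (x - t)
    positivity
  have htend : Tendsto ψ atTop (𝓝 0) := by
    have h1 : Tendsto (fun t : ℝ => -(x - t)) atTop atTop := by
      simpa [neg_sub, sub_eq_add_neg] using tendsto_atTop_add_const_right atTop (-x) tendsto_id
    have hv : Tendsto (fun t : ℝ => (1 + Real.exp (-(x - t)))⁻¹) atTop (𝓝 0) :=
      (tendsto_atTop_add_const_left atTop 1 (Real.tendsto_exp_atTop.comp h1)).inv_tendsto_atTop
    have hu : Tendsto (fun t : ℝ => Real.exp (-t)) atTop (𝓝 0) :=
      Real.tendsto_exp_atBot.comp tendsto_neg_atTop_atBot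
    have := (hu.mul hv).neg
    simpa only [mul_zero, neg_zero] using this
  refine ⟨?_, integrableOn_Ioi_deriv_of_nonneg' hderiv hpos htend⟩
  have := integral_Ioi_of_hasDerivAt_of_nonneg' hderiv hpos htend
  rw [this, hψ]
  simp [Real.exp_zero]

theorem min_logistic_plus_exponential_cdf
    {Ω : Type*} [MeasureSpace Ω] (P : Measure Ω) [IsProbabilityMeasure P]
    (X₁ X₂ η : Ω → ℝ)
    (hm₁ : Measurable X₁) (hm₂ : Measurable X₂) (hmη : Measurable η)
    (hindep : iIndepFun ![X₁, X₂, η] P)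
    (hX₁ : Measure.map X₁ P = logisticMeasure)
    (hX₂ : Measure.map X₂ P = logisticMeasure)
    (hη : Measure.map η P = expMeasure 1) :
    ∀ x : ℝ, (P {ω | min (X₁ ω) (X₂ ω) + η ω ≤ x}).toReal = (1 + Real.exp (-x))⁻¹ := by
  intro x
  haveI hPμ : IsProbabilityMeasure logisticMeasure := hX₁ ▸ Measure.isProbabilityMeasure_map hm₁.aemeasurable
  haveI : IsProbabilityMeasure (expMeasure 1) := isProbabilityMeasure_expMeasure one_pos
  have hmmin : Measurable (fun p : ℝ × ℝ => min p.1 p.2) := measurable_fst.min measurable_snd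
  have hM : Measurable (fun ω => min (X₁ ω) (X₂ ω)) := hm₁.min hm₂
  haveI : IsProbabilityMeasure
      (Measure.map (fun p : ℝ × ℝ => min p.1 p.2) (logisticMeasure.prod logisticMeasure)) :=
    Measure.isProbabilityMeasure_map hmmin.aemeasurable
  have hmeasall : ∀ i, Measurable (![X₁, X₂, η] i) := by
    intro i; fin_cases i <;> assumption
  have h12 : IndepFun X₁ X₂ P := by
    have := hindep.indepFun (show (0:Fin 3) ≠ 1 by decide)
    simpa using this
  have h12η : IndepFun (fun ω => (X₁ ω, X₂ ω)) η P := by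
    have := hindep.indepFun_prodMk hmeasall 0 1 2 (by decide) (by decide)
    simpa using this
  have hMη : IndepFun η (fun ω => min (X₁ ω) (X₂ ω)) P :=
    (h12η.comp hmmin measurable_id).symm
  have hpairlaw : Measure.map (fun ω => (X₁ ω, X₂ ω)) P = logisticMeasure.prod logisticMeasure := by
    rw [(indepFun_iff_map_prod_eq_prod_map_map hm₁.aemeasurable hm₂.aemeasurable).mp h12, hX₁, hX₂]
  have hMlaw : Measure.map (fun ω => min (X₁ ω) (X₂ ω)) P
      = Measure.map (fun p : ℝ × ℝ => min p.1 p.2) (logisticMeasure.prod logisticMeasure) := by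
    rw [← hpairlaw, Measure.map_map hmmin (hm₁.prodMk hm₂)]; rfl
  have hjoint : Measure.map (fun ω => (η ω, min (X₁ ω) (X₂ ω))) P
      = (expMeasure 1).prod
        (Measure.map (fun p : ℝ × ℝ => min p.1 p.2) (logisticMeasure.prod logisticMeasure)) := by
    rw [(indepFun_iff_map_prod_eq_prod_map_map hmη.aemeasurable hM.aemeasurable).mp hMη, hη, hMlaw]
  have hs : MeasurableSet {p : ℝ × ℝ | p.2 + p.1 ≤ x} :=
    measurableSet_le (measurable_snd.add measurable_fst) measurable_const
  have hP : P {ω | min (X₁ ω) (X₂ ω) + η ω ≤ x}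
      = Measure.map (fun ω => (η ω, min (X₁ ω) (X₂ ω))) P {p : ℝ × ℝ | p.2 + p.1 ≤ x} := by
    rw [Measure.map_apply (hmη.prodMk hM) hs]; rfl
  rw [hP, hjoint, Measure.prod_apply hs]
  have hpre : ∀ t : ℝ, (Prod.mk t ⁻¹' {p : ℝ × ℝ | p.2 + p.1 ≤ x}) = Set.Iic (x - t) := by
    intro t; ext m; simp [le_sub_iff_add_le]
  have hcong : (fun t => Measure.map (fun p : ℝ × ℝ => min p.1 p.2)
        (logisticMeasure.prod logisticMeasure) (Prod.mk t ⁻¹' {p : ℝ × ℝ | p.2 + p.1 ≤ x}))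
      = fun t => ENNReal.ofReal (1 - ((1 + Real.exp (x - t))⁻¹)^2) := by
    funext t; rw [hpre t, minCDF]
  rw [lintegral_congr (fun t => congrFun hcong t)]
  have hg : Measurable fun t : ℝ => ENNReal.ofReal (1 - ((1 + Real.exp (x - t))⁻¹)^2) := by
    apply Measurable.ennreal_ofReal
    fun_prop
  rw [show expMeasure 1 = volume.withDensity (exponentialPDF 1) from rfl,
    lintegral_withDensity_eq_lintegral_mul volume
      (show Measurable (exponentialPDF 1) from (measurable_exponentialPDFReal 1).ennreal_ofReal) hg]
  have hpt : ∀ t : ℝ, (exponentialPDF 1 * fun t => ENNReal.ofReal (1 - ((1 + Real.exp (x - t))⁻¹)^2)) t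
      = Set.indicator (Set.Ici 0)
        (fun t => ENNReal.ofReal (Real.exp (-t) * (1 - ((1 + Real.exp (x - t))⁻¹)^2))) t := by
    intro t
    by_cases ht : 0 ≤ t
    · rw [Set.indicator_of_mem (Set.mem_Ici.mpr ht), Pi.mul_apply, exponentialPDF_of_nonneg ht,
        ← ENNReal.ofReal_mul (by positivity)]
      norm_num
    · rw [Set.indicator_of_notMem (fun hmem => ht (Set.mem_Ici.mp hmem)), Pi.mul_apply, exponentialPDF_of_neg (not_le.mp ht), zero_mul]
  rw [lintegral_congr hpt, lintegral_indicator measurableSet_Ici _,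
    show (volume.restrict (Set.Ici (0:ℝ))) = volume.restrict (Set.Ioi 0) from
      (Measure.restrict_congr_set Ioi_ae_eq_Ici).symm,
    ← ofReal_integral_eq_lintegral_ofReal (conv_integral x).2
      (Filter.Eventually.of_forall fun t => mul_nonneg (Real.exp_pos _).le (G_nonneg _)),
    (conv_integral x).1, ENNReal.toReal_ofReal (by positivity)]
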